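/- For every nonnegative integer n, Σ_{k=0}^n k H_k^{(3)} = (n(n+1)/2) H_{n+1}^{(3)} + (1/2) H_{n+1}^{(2)} − (1/2) H_{n+1}. -/

import Mathlib

/-- Generalized harmonic number `H n m = ∑_{k=1}^n 1/k^m` (order `m : ℤ`), as a rational. -/
def H (n : ℕ) (m : ℤ) : ℚ := ∑ k ∈ Finset.range n, ((k : ℚ) + 1) ^ (-m)

lemma H_succ (n : ℕ) (m : ℕ) : H (n + 1) (m : ℤ) = H n m + 1 / ((n : ℚ) + 1) ^ m := by
  simp [H, Finset.sum_range_succ, zpow_neg, zpow_natCast, one_div]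

theorem sum_k_harmonic3 (n : ℕ) :
    ∑ k ∈ Finset.range (n + 1), (k : ℚ) * H k 3
      = ((n : ℚ) * ((n : ℚ) + 1) / 2) * H (n + 1) 3 + (1 / 2) * H (n + 1) 2
        - (1 / 2) * H (n + 1) 1 := by
  induction n with
  | zero => simp [H]
  | succ n ih =>
    rw [Finset.sum_range_succ, ih, show ((3:ℤ)) = ((3:ℕ):ℤ) by norm_num,
      show ((2:ℤ)) = ((2:ℕ):ℤ) by norm_num, show ((1:ℤ)) = ((1:ℕ):ℤ) by norm_num,
      H_succ (n+1) 3, H_succ (n+1) 2, H_succ (n+1) 1]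
    push_cast
    have h : ((n : ℚ) + 1 + 1) ≠ 0 := by positivity
    field_simp
    ring
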